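/- Let X be the topological space on {m_i : i ∈ ℕ ∪ {∞}} ∪ {p_j : j ≥ 1} whose closed sets are the specialization-stable subsets that are finite or contain m_∞. Then every point x ∈ X is weakly visible: there exist a Thomason subset V and a Thomason subset W of X such that {x} = V ∩ (X \ W). -/
import Mathlib


open Topology

/-- The points of the space: `m i` for `i ∈ ℕ ∪ {∞}` and `p j` for `j ≥ 1`. -/
inductive Pt : Type where
  | m : ℕ∞ → Pt
  | p : ℕ+ → Pt

/-- Closed sets: specialization-stable subsets that are finite or contain `m ∞`. -/
def ClosedCond (Z : Set Pt) : Prop :=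
  (∀ j : ℕ+, Pt.p j ∈ Z →
      Pt.m (((j : ℕ) - 1 : ℕ) : ℕ∞) ∈ Z ∧ Pt.m ((j : ℕ) : ℕ∞) ∈ Z) ∧
  (Z.Finite ∨ Pt.m ⊤ ∈ Z)


/-- A Thomason subset: a union of closed subsets each with quasi-compact open complement. -/
def IsThomason {α : Type*} [TopologicalSpace α] (V : Set α) : Prop :=
  ∃ S : Set (Set α), V = ⋃₀ S ∧ ∀ Z ∈ S, IsClosed Z ∧ IsCompact Zᶜ

/-- Any set containing `m ⊤` is compact. -/
lemma aux_compact [t : TopologicalSpace Pt]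
    (ht : ∀ Z : Set Pt, IsClosed Z ↔ ClosedCond Z) {A : Set Pt}
    (hA : Pt.m ⊤ ∈ A) : IsCompact A := by
  classical
  refine isCompact_of_finite_subcover fun {ι} U hU hcov => ?_
  obtain ⟨i₀, hi₀⟩ := Set.mem_iUnion.mp (hcov hA)
  have hcl : ClosedCond (U i₀)ᶜ := (ht _).mp (hU i₀).isClosed_compl
  have hfin : ((U i₀)ᶜ).Finite := by
    rcases hcl.2 with h | h
    · exact h
    · exact (h hi₀).elim
  choose f hf using fun x (hx : x ∈ A) => Set.mem_iUnion.mp (hcov hx)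
  refine ⟨insert i₀ ((hfin.toFinset).image fun x =>
      if hx : x ∈ A then f x hx else i₀), fun x hx => ?_⟩
  by_cases hxU : x ∈ U i₀
  · exact Set.mem_biUnion (Finset.mem_insert_self _ _) hxU
  · have hxF : x ∈ hfin.toFinset := hfin.mem_toFinset.mpr hxU
    refine Set.mem_biUnion
      (Finset.mem_insert_of_mem (Finset.mem_image.mpr ⟨x, hxF, rfl⟩)) ?_
    rw [dif_pos hx]
    exact hf x hx

/-- The finite closed pieces covering everything except `m ⊤`. -/
def Cset (n : ℕ) : Set Pt :=
  {x | ∃ i : ℕ, i ≤ n ∧ x = Pt.m (i : ℕ∞)} ∪ {x | ∃ j : ℕ+, (j : ℕ) ≤ n ∧ x = Pt.p j}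

lemma Cset_finite (n : ℕ) : (Cset n).Finite := by
  have h1 : {x | ∃ i : ℕ, i ≤ n ∧ x = Pt.m (i : ℕ∞)}
      = (fun i : ℕ => Pt.m (i : ℕ∞)) '' (Set.Iic n) := by
    ext x; simp [Set.mem_image, Set.mem_Iic, eq_comm]
  have h2 : {x | ∃ j : ℕ+, (j : ℕ) ≤ n ∧ x = Pt.p j}
      = (fun j : ℕ+ => Pt.p j) '' {j : ℕ+ | (j : ℕ) ≤ n} := by
    ext x; simp [Set.mem_image, eq_comm]
  have hfin2 : {j : ℕ+ | (j : ℕ) ≤ n}.Finite := by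
    apply Set.Finite.preimage (f := fun j : ℕ+ => (j : ℕ)) ?_ (Set.finite_Iic n)
    exact fun a _ b _ h => PNat.coe_injective h
  rw [Cset, h1, h2]
  exact ((Set.finite_Iic n).image _).union (hfin2.image _)

lemma Cset_closedCond (n : ℕ) : ClosedCond (Cset n) := by
  constructor
  · rintro j hj
    rcases hj with ⟨i, _, h⟩ | ⟨k, hk, h⟩
    · exact absurd h (by simp)
    · have hkj : k = j := by
        cases h
        rfl
      subst hkj
      constructor
      · exact Or.inl ⟨(k : ℕ) - 1, le_trans (Nat.sub_le _ _) hk, rfl⟩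
      · exact Or.inl ⟨(k : ℕ), hk, rfl⟩
  · left; exact Cset_finite n

lemma top_not_mem_Cset (n : ℕ) : Pt.m ⊤ ∉ Cset n := by
  rintro (⟨i, _, h⟩ | ⟨j, _, h⟩)
  · rw [Pt.m.injEq] at h
    exact (WithTop.coe_ne_top h.symm)
  · exact Pt.noConfusion h

lemma sUnion_Cset : ⋃₀ {Z | ∃ n : ℕ, Z = Cset n} = {Pt.m ⊤}ᶜ := by
  ext x
  constructor
  · rintro ⟨Z, ⟨n, rfl⟩, hx⟩
    intro hx'
    rw [Set.mem_singleton_iff] at hx'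
    subst hx'
    exact top_not_mem_Cset n hx
  · intro hx
    cases x with
    | m i =>
      cases i with
      | top => exact absurd rfl hx
      | coe k => exact ⟨Cset k, ⟨k, rfl⟩, Or.inl ⟨k, le_refl _, rfl⟩⟩
    | p j => exact ⟨Cset j, ⟨(j : ℕ), rfl⟩, Or.inr ⟨j, le_refl _, rfl⟩⟩

/-- Every point `x` is weakly visible: `{x} = V ∩ (X \ W)` for Thomason subsets `V`, `W`. -/
theorem stmt_10 [t : TopologicalSpace Pt]
    (ht : ∀ Z : Set Pt, IsClosed Z ↔ ClosedCond Z) :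
    ∀ x : Pt, ∃ V W : Set Pt, IsThomason V ∧ IsThomason W ∧ ({x} : Set Pt) = V ∩ Wᶜ := by
  have hunivT : IsThomason (Set.univ : Set Pt) := by
    refine ⟨{Set.univ}, by simp, ?_⟩
    rintro Z rfl
    refine ⟨isClosed_univ, ?_⟩
    rw [Set.compl_univ]
    exact isCompact_empty
  intro x
  cases x with
  | m i =>
    cases i with
    | top =>
      -- V = univ, W = union of Cset n
      refine ⟨Set.univ, {Pt.m ⊤}ᶜ, hunivT, ?_, ?_⟩
      · refine ⟨{Z | ∃ n : ℕ, Z = Cset n}, sUnion_Cset.symm, ?_⟩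
        rintro Z ⟨n, rfl⟩
        refine ⟨(ht _).mpr (Cset_closedCond n), aux_compact ht ?_⟩
        exact top_not_mem_Cset n
      · simp
    | coe k =>
      -- V = {m k}, W = ∅
      refine ⟨{Pt.m (k : ℕ∞)}, ∅, ?_, ?_, ?_⟩
      · refine ⟨{{Pt.m (k : ℕ∞)}}, by simp, ?_⟩
        rintro Z rfl
        constructor
        · refine (ht _).mpr ⟨?_, Or.inl (Set.finite_singleton _)⟩
          rintro j hj
          exact absurd hj (by simp)
        · refine aux_compact ht ?_
          simp only [Set.mem_compl_iff, Set.mem_singleton_iff, Pt.m.injEq]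
          exact fun h => WithTop.coe_ne_top h.symm
      · exact ⟨∅, by simp, by simp⟩
      · simp
  | p j =>
    -- V = univ, W = {p j}ᶜ
    refine ⟨Set.univ, {Pt.p j}ᶜ, hunivT, ?_, ?_⟩
    · refine ⟨{{Pt.p j}ᶜ}, by simp, ?_⟩
      rintro Z rfl
      constructor
      · refine (ht _).mpr ⟨?_, Or.inr (by simp)⟩
        rintro k _
        constructor <;> simp
      · rw [compl_compl]
        exact (Set.finite_singleton _).isCompact
    · simp
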